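/- Let n ≥ 2 and let U ⊆ ℝⁿ be an open set, and let φ : U → ℝ be smooth. Suppose that for every p ∈ U and every unit vector v ∈ ℝⁿ there are ε(p,v) > 0 and a curve γ_{p,v} : (−ε(p,v), ε(p,v)) → U solving the conformal geodesic equation for φ with γ_{p,v}(0) = p and γ_{p,v}′(0) = v. Fix p ∈ U and assume there is δ > 0 such that for each t ∈ (0, δ) all the curves γ_{p,v} (‖v‖ = 1) are defined at t and the set { γ_{p,v}(t) : ‖v‖ = 1 } equals the Euclidean sphere of some centre c(t) ∈ ℝⁿ and radius r(t) > 0. Then c(t) = p − (t²/2)·∇φ(p) + o(t²) as t → 0⁺. -/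

import Mathlib

open scoped RealInnerProductSpace
open Asymptotics Filter Topology

set_option maxHeartbeats 1000000

noncomputable section

/-- `γ` solves the conformal geodesic equation for `φ` on the interval `(-ε, ε)`,
with values in `U`:  `γ″ = ‖γ′‖² ∇φ(γ) − 2 ⟨∇φ(γ), γ′⟩ γ′`. -/
def IsConformalGeodesic {n : ℕ} (U : Set (EuclideanSpace ℝ (Fin n)))
    (φ : EuclideanSpace ℝ (Fin n) → ℝ) (ε : ℝ)
    (γ : ℝ → EuclideanSpace ℝ (Fin n)) : Prop :=
  (∀ t ∈ Set.Ioo (-ε) ε, γ t ∈ U) ∧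
  ContDiffOn ℝ 2 γ (Set.Ioo (-ε) ε) ∧
  ∀ t ∈ Set.Ioo (-ε) ε,
    deriv (deriv γ) t =
      (‖deriv γ t‖ ^ 2) • gradient φ (γ t)
        - (2 * ⟪gradient φ (γ t), deriv γ t⟫) • deriv γ t

lemma gradient_continuousOn' {n : ℕ} {U : Set (EuclideanSpace ℝ (Fin n))} (hU : IsOpen U)
    {φ : EuclideanSpace ℝ (Fin n) → ℝ} (hφ : ContDiffOn ℝ (⊤ : ℕ∞) φ U) :
    ContinuousOn (gradient φ) U := by
  have h := hφ.continuousOn_fderiv_of_isOpen hU (by exact_mod_cast le_top)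
  exact (InnerProductSpace.toDual ℝ _).symm.continuous.comp_continuousOn h

lemma conformal_taylor {n : ℕ} {U : Set (EuclideanSpace ℝ (Fin n))} (hU : IsOpen U)
    {φ : EuclideanSpace ℝ (Fin n) → ℝ} (hgrad : ContinuousOn (gradient φ) U)
    {ε : ℝ} (hε : 0 < ε) {γ : ℝ → EuclideanSpace ℝ (Fin n)}
    (hg : IsConformalGeodesic U φ ε γ)
    {p v : EuclideanSpace ℝ (Fin n)} (hp : γ 0 = p) (hv : deriv γ 0 = v) (hv1 : ‖v‖ = 1) :
    (fun t => γ t - p - t • v - (t ^ 2 / 2) •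
        (gradient φ p - (2 * ⟪gradient φ p, v⟫) • v)) =o[𝓝[>] (0:ℝ)] fun t => t ^ 2 := by
  obtain ⟨hmem, hC2, hODE⟩ := hg
  have hs : IsOpen (Set.Ioo (-ε) ε) := isOpen_Ioo
  have h0s : (0:ℝ) ∈ Set.Ioo (-ε) ε := ⟨by linarith, hε⟩
  have hder1 : ∀ t ∈ Set.Ioo (-ε) ε, HasDerivAt γ (deriv γ t) t := fun t ht =>
    ((hC2.differentiableOn (by norm_num)).differentiableAt (hs.mem_nhds ht)).hasDerivAt
  have hC1' : ContDiffOn ℝ 1 (deriv γ) (Set.Ioo (-ε) ε) :=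
    hC2.deriv_of_isOpen hs (by norm_num)
  have hder2 : ∀ t ∈ Set.Ioo (-ε) ε, HasDerivAt (deriv γ) (deriv (deriv γ) t) t := fun t ht =>
    ((hC1'.differentiableOn (by norm_num)).differentiableAt (hs.mem_nhds ht)).hasDerivAt
  have hγc : ContinuousAt γ 0 := hC2.continuousOn.continuousAt (hs.mem_nhds h0s)
  have hDc : ContinuousAt (deriv γ) 0 := hC1'.continuousOn.continuousAt (hs.mem_nhds h0s)
  have hgc : ContinuousAt (fun t => gradient φ (γ t)) 0 :=
    (hgrad.continuousAt (hU.mem_nhds (hmem 0 h0s))).comp hγc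
  have hFcont : ContinuousAt (fun t => (‖deriv γ t‖ ^ 2) • gradient φ (γ t)
      - (2 * ⟪gradient φ (γ t), deriv γ t⟫) • deriv γ t) 0 :=
    ((hDc.norm.pow 2).smul hgc).sub (((continuousAt_const (y := (2:ℝ))).mul (hgc.inner (𝕜 := ℝ) hDc)).smul hDc)
  have hDDc : ContinuousAt (deriv (deriv γ)) 0 := by
    refine hFcont.congr ?_
    filter_upwards [hs.mem_nhds h0s] with t ht
    exact (hODE t ht).symm
  set a := deriv (deriv γ) 0 with ha0
  have ha : a = gradient φ p - (2 * ⟪gradient φ p, v⟫) • v := by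
    rw [ha0, hODE 0 h0s, hp, hv, hv1]
    norm_num
  rw [← ha]
  rw [isLittleO_iff]
  intro η hη
  have hev : ∀ᶠ x in 𝓝 (0:ℝ), ‖deriv (deriv γ) x - a‖ ≤ η ∧ x ∈ Set.Ioo (-ε) ε := by
    have h1 : ∀ᶠ x in 𝓝 (0:ℝ), deriv (deriv γ) x ∈ Metric.closedBall a η :=
      hDDc (Metric.closedBall_mem_nhds a hη)
    filter_upwards [h1, hs.mem_nhds h0s] with x hx1 hx2
    exact ⟨by simpa [Metric.mem_closedBall, dist_eq_norm] using hx1, hx2⟩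
  obtain ⟨ρ, hρ, hball⟩ := Metric.eventually_nhds_iff.mp hev
  filter_upwards [Ioo_mem_nhdsGT hρ] with t ht
  obtain ⟨ht0, htρ⟩ := ht
  have hIcc : ∀ x ∈ Set.Icc (0:ℝ) t, ‖deriv (deriv γ) x - a‖ ≤ η ∧ x ∈ Set.Ioo (-ε) ε := by
    intro x hx
    refine hball ?_
    rw [Real.dist_eq, sub_zero, abs_of_nonneg hx.1]
    exact lt_of_le_of_lt hx.2 htρ
  set g1 : ℝ → EuclideanSpace ℝ (Fin n) := fun x => deriv γ x - v - x • a with hg1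
  have hg1d : ∀ x ∈ Set.Icc (0:ℝ) t,
      HasDerivWithinAt g1 (deriv (deriv γ) x - a) (Set.Icc 0 t) x := by
    intro x hx
    have h1 : HasDerivAt (fun y : ℝ => y • a) ((1:ℝ) • a) x := (hasDerivAt_id x).smul_const a
    have h2 : HasDerivAt g1 (deriv (deriv γ) x - a) x := by
      have := ((hder2 x (hIcc x hx).2).sub_const v).sub h1
      rw [one_smul] at this; exact this
    exact h2.hasDerivWithinAt
  have hg1b : ∀ y ∈ Set.Icc (0:ℝ) t, ‖g1 y‖ ≤ η * t := by
    intro y hy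
    have h0m : (0:ℝ) ∈ Set.Icc (0:ℝ) t := ⟨le_refl _, le_of_lt ht0⟩
    have := (convex_Icc (0:ℝ) t).norm_image_sub_le_of_norm_hasDerivWithin_le hg1d
      (fun x hx => (hIcc x hx).1) h0m hy
    have hg10 : g1 0 = 0 := by simp [hg1, hv]
    rw [hg10, sub_zero, sub_zero] at this
    calc ‖g1 y‖ ≤ η * ‖y‖ := this
      _ ≤ η * t := by
          have hyt : ‖y‖ ≤ t := by rw [Real.norm_of_nonneg hy.1]; exact hy.2
          exact mul_le_mul_of_nonneg_left hyt (le_of_lt hη)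
  set g : ℝ → EuclideanSpace ℝ (Fin n) := fun x => γ x - p - x • v - (x ^ 2 / 2) • a with hgdef
  have hgd : ∀ x ∈ Set.Icc (0:ℝ) t, HasDerivWithinAt g (g1 x) (Set.Icc 0 t) x := by
    intro x hx
    have h1 : HasDerivAt (fun y : ℝ => y • v) ((1:ℝ) • v) x := (hasDerivAt_id x).smul_const v
    have h2 : HasDerivAt (fun y : ℝ => (y ^ 2 / 2) • a) ((↑2 * x ^ (2-1) / 2) • a) x :=
      ((hasDerivAt_pow 2 x).div_const 2).smul_const a
    have h3 : HasDerivAt g (deriv γ x - v - x • a) x := by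
      have := (((hder1 x (hIcc x hx).2).sub_const p).sub h1).sub h2
      have e : deriv γ x - (1:ℝ) • v - ((↑2 * x ^ (2-1) / 2) • a) = deriv γ x - v - x • a := by
        norm_num
      rw [← e]
      exact this
    exact h3.hasDerivWithinAt
  have h0m : (0:ℝ) ∈ Set.Icc (0:ℝ) t := ⟨le_refl _, le_of_lt ht0⟩
  have htmem : t ∈ Set.Icc (0:ℝ) t := ⟨le_of_lt ht0, le_refl _⟩
  have hfin := (convex_Icc (0:ℝ) t).norm_image_sub_le_of_norm_hasDerivWithin_le hgd hg1b h0m htmem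
  have hg0 : g 0 = 0 := by simp [hgdef, hp]
  rw [hg0, sub_zero, sub_zero] at hfin
  have hbound : ‖g t‖ ≤ η * t * t := by
    calc ‖g t‖ ≤ η * t * ‖t‖ := hfin
      _ = η * t * t := by rw [Real.norm_of_nonneg (le_of_lt ht0)]
  calc ‖γ t - p - t • v - (t ^ 2 / 2) • a‖ = ‖g t‖ := rfl
    _ ≤ η * t * t := hbound
    _ = η * ‖t ^ 2‖ := by rw [Real.norm_of_nonneg (sq_nonneg t)]; ring

/-- Second-order deviation of the geodesic with initial direction `u` from its
second-order Taylor model. -/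
def csA {n : ℕ} (φ : EuclideanSpace ℝ (Fin n) → ℝ)
    (γ : EuclideanSpace ℝ (Fin n) → EuclideanSpace ℝ (Fin n) → ℝ → EuclideanSpace ℝ (Fin n))
    (p u : EuclideanSpace ℝ (Fin n)) (t : ℝ) : EuclideanSpace ℝ (Fin n) :=
  γ p u t - p - t • u - (t ^ 2 / 2) • (gradient φ p - (2 * ⟪gradient φ p, u⟫) • u)

lemma euclidean_norm_le_of_forall {n : ℕ} (hn : 0 < n) (x : EuclideanSpace ℝ (Fin n)) (m : ℝ)
    (h : ∀ i, |x i| ≤ m) : ‖x‖ ≤ (n : ℝ) * m := by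
  have hm : 0 ≤ m := le_trans (abs_nonneg _) (h ⟨0, hn⟩)
  rw [EuclideanSpace.norm_eq]
  have h1 : ∑ i, ‖x i‖ ^ 2 ≤ (n : ℝ) * m ^ 2 := by
    calc ∑ i, ‖x i‖ ^ 2 ≤ ∑ _i : Fin n, m ^ 2 := by
          refine Finset.sum_le_sum fun i _ => ?_
          have := h i
          rw [Real.norm_eq_abs]
          nlinarith [abs_nonneg (x i)]
      _ = (n : ℝ) * m ^ 2 := by simp [Finset.sum_const, mul_comm]
  have h2 : (n : ℝ) * m ^ 2 ≤ ((n : ℝ) * m) ^ 2 := by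
    have hn1 : (1:ℝ) ≤ (n:ℝ) := by exact_mod_cast hn
    nlinarith
  calc Real.sqrt (∑ i, ‖x i‖ ^ 2) ≤ Real.sqrt (((n:ℝ) * m) ^ 2) :=
        Real.sqrt_le_sqrt (le_trans h1 h2)
    _ = (n : ℝ) * m := Real.sqrt_sq (by positivity)

/-- The Euclidean centres of the geodesic hyperspheres of the conformal metric
`e^{2φ}·g_euc` centred at `p` satisfy `c(t) = p − (t²/2)·∇φ(p) + o(t²)` as `t → 0⁺`. -/
theorem geodesic_sphere_centre_expansion {n : ℕ} (hn : 2 ≤ n)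
    (U : Set (EuclideanSpace ℝ (Fin n))) (hU : IsOpen U)
    (φ : EuclideanSpace ℝ (Fin n) → ℝ) (hφ : ContDiffOn ℝ (⊤ : ℕ∞) φ U)
    (ε : EuclideanSpace ℝ (Fin n) → EuclideanSpace ℝ (Fin n) → ℝ)
    (γ : EuclideanSpace ℝ (Fin n) → EuclideanSpace ℝ (Fin n) → ℝ →
      EuclideanSpace ℝ (Fin n))
    (hgeo : ∀ p ∈ U, ∀ v : EuclideanSpace ℝ (Fin n), ‖v‖ = 1 →
      0 < ε p v ∧ IsConformalGeodesic U φ (ε p v) (γ p v) ∧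
      γ p v 0 = p ∧ deriv (γ p v) 0 = v)
    (p : EuclideanSpace ℝ (Fin n)) (hp : p ∈ U)
    (δ : ℝ) (hδ : 0 < δ)
    (c : ℝ → EuclideanSpace ℝ (Fin n)) (r : ℝ → ℝ)
    (hsph : ∀ t ∈ Set.Ioo (0 : ℝ) δ,
      (∀ v : EuclideanSpace ℝ (Fin n), ‖v‖ = 1 → t < ε p v) ∧
      0 < r t ∧
      {x | ∃ v : EuclideanSpace ℝ (Fin n), ‖v‖ = 1 ∧ γ p v t = x} =
        {x | ‖x - c t‖ = r t}) :
    (fun t : ℝ => c t - (p - (t ^ 2 / 2) • gradient φ p))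
      =o[𝓝[>] 0] (fun t : ℝ => t ^ 2) := by
  classical
  have hgrad := gradient_continuousOn' hU hφ
  set w := fun t : ℝ => c t - (p - (t ^ 2 / 2) • gradient φ p) with hwdef
  have hNn : 0 < n := lt_of_lt_of_le (by norm_num) hn
  have hN2 : (2:ℝ) ≤ (n:ℝ) := by exact_mod_cast hn
  have hN0 : (0:ℝ) < (n:ℝ) := by linarith
  have hG'0 : 0 ≤ ‖gradient φ p‖ := norm_nonneg _
  set G' := ‖gradient φ p‖ with hG'def
  set e : Fin n → EuclideanSpace ℝ (Fin n) := fun i => EuclideanSpace.single i (1:ℝ) with hedef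
  have he1 : ∀ i, ‖e i‖ = 1 := fun i => by simp [hedef]
  have hen1 : ∀ i, ‖-e i‖ = 1 := fun i => by rw [norm_neg]; exact he1 i
  have hA : ∀ u : EuclideanSpace ℝ (Fin n), ‖u‖ = 1 →
      (fun t => csA φ γ p u t) =o[𝓝[>] (0:ℝ)] fun t => t ^ 2 := by
    intro u hu
    obtain ⟨hεp, hgc, h0, h1⟩ := hgeo p hp u hu
    have := conformal_taylor hU hgrad hεp hgc h0 h1 hu
    unfold csA
    exact this
  set α := fun t : ℝ => ∑ i : Fin n, (‖csA φ γ p (e i) t‖ + ‖csA φ γ p (-e i) t‖) with hαdef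
  have hαo : α =o[𝓝[>] (0:ℝ)] fun t => t ^ 2 := by
    refine (Asymptotics.IsLittleO.sum (s := Finset.univ)
      (A := fun i t => ‖csA φ γ p (e i) t‖ + ‖csA φ γ p (-e i) t‖) ?_).congr_left
      (fun t => by rw [Finset.sum_apply])
    intro i _
    exact (hA (e i) (he1 i)).norm_left.add (hA (-e i) (hen1 i)).norm_left
  have hα0 : ∀ t, 0 ≤ α t := fun t => Finset.sum_nonneg fun i _ => by positivity
  have hαi : ∀ (i : Fin n) (t : ℝ),
      ‖csA φ γ p (e i) t‖ + ‖csA φ γ p (-e i) t‖ ≤ α t := fun i t =>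
    Finset.single_le_sum (f := fun j => ‖csA φ γ p (e j) t‖ + ‖csA φ γ p (-e j) t‖)
      (fun j _ => by positivity) (Finset.mem_univ i)
  rw [isLittleO_iff]
  intro η hη
  set η₁ := η / (2 * (n:ℝ) * (1 + G')) with hη₁def
  have hden : (0:ℝ) < 2 * (n:ℝ) * (1 + G') := by positivity
  have hη₁ : 0 < η₁ := div_pos hη hden
  have hηeq : η = η₁ * (2 * (n:ℝ) * (1 + G')) := by
    rw [hη₁def]; field_simp
  have E1 : ∀ᶠ t in 𝓝[>] (0:ℝ), α t ≤ η₁ * t ^ 2 := by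
    filter_upwards [isLittleO_iff.mp hαo hη₁, self_mem_nhdsWithin] with t h1 h2
    rw [Real.norm_eq_abs, Real.norm_eq_abs, abs_of_nonneg (hα0 t),
      abs_of_nonneg (sq_nonneg t)] at h1
    exact h1
  have hbigO : (fun t : ℝ => t ^ 2) =O[𝓝[>] (0:ℝ)] fun t => t := by
    rw [isBigO_iff]
    refine ⟨1, ?_⟩
    filter_upwards [Ioo_mem_nhdsGT (zero_lt_one)] with t ht
    obtain ⟨h1, h2⟩ := ht
    rw [Real.norm_eq_abs, Real.norm_eq_abs, abs_of_nonneg (sq_nonneg t), abs_of_nonneg h1.le]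
    nlinarith
  have E2 : ∀ᶠ t in 𝓝[>] (0:ℝ), α t ≤ t / (2 * (n:ℝ)) := by
    have h := isLittleO_iff.mp (hαo.trans_isBigO hbigO)
      (c := 1 / (2 * (n:ℝ))) (by positivity)
    filter_upwards [h, self_mem_nhdsWithin] with t h1 h2
    have h2' : (0:ℝ) < t := h2
    rw [Real.norm_eq_abs, Real.norm_eq_abs, abs_of_nonneg (hα0 t), abs_of_nonneg h2'.le] at h1
    calc α t ≤ 1 / (2 * (n:ℝ)) * t := h1
      _ = t / (2 * (n:ℝ)) := by ring
  have E3 : Set.Ioo (0:ℝ) (min δ 1) ∈ 𝓝[>] (0:ℝ) :=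
    Ioo_mem_nhdsGT (lt_min hδ zero_lt_one)
  filter_upwards [E1, E2, E3] with t h1 h2 h3
  obtain ⟨ht0, htm⟩ := h3
  have htδ : t < δ := lt_of_lt_of_le htm (min_le_left _ _)
  have ht1 : t ≤ 1 := le_of_lt (lt_of_lt_of_le htm (min_le_right _ _))
  obtain ⟨-, hr, hset⟩ := hsph t ⟨ht0, htδ⟩
  -- per-component estimate
  have hcomp : ∀ i : Fin n, |w t i| * (4 * t) ≤
      2 * t * α t + α t * (4 * t ^ 2 * G' + α t + 2 * ‖w t‖) := by
    intro i
    have hu1 : ‖e i‖ = 1 := he1 i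
    have hP' : ‖γ p (e i) t - c t‖ = r t := by
      have hm : γ p (e i) t ∈ {x | ∃ v : EuclideanSpace ℝ (Fin n), ‖v‖ = 1 ∧ γ p v t = x} :=
        ⟨e i, hu1, rfl⟩
      rw [hset] at hm
      exact hm
    have hQ' : ‖γ p (-e i) t - c t‖ = r t := by
      have hm : γ p (-e i) t ∈ {x | ∃ v : EuclideanSpace ℝ (Fin n), ‖v‖ = 1 ∧ γ p v t = x} :=
        ⟨-e i, hen1 i, rfl⟩
      rw [hset] at hm
      exact hm
    have heqn : ‖γ p (e i) t - c t‖ = ‖γ p (-e i) t - c t‖ := by rw [hP', hQ']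
    have hkey : ⟪γ p (e i) t - γ p (-e i) t,
        γ p (e i) t + γ p (-e i) t - (2:ℝ) • c t⟫ = 0 := by
      have ha1 : γ p (e i) t - γ p (-e i) t =
          (γ p (e i) t - c t) - (γ p (-e i) t - c t) := by abel
      have ha2 : γ p (e i) t + γ p (-e i) t - (2:ℝ) • c t =
          (γ p (e i) t - c t) + (γ p (-e i) t - c t) := by module
      rw [ha1, ha2, inner_sub_left, inner_add_right, inner_add_right,
        real_inner_comm (γ p (-e i) t - c t) (γ p (e i) t - c t),
        real_inner_self_eq_norm_sq, real_inner_self_eq_norm_sq, heqn]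
      ring
    have hP : γ p (e i) t = p + t • e i
        + (t ^ 2 / 2) • (gradient φ p - (2 * ⟪gradient φ p, e i⟫) • e i)
        + csA φ γ p (e i) t := by
      unfold csA; module
    have hQ : γ p (-e i) t = p - t • e i
        + (t ^ 2 / 2) • (gradient φ p - (2 * ⟪gradient φ p, e i⟫) • e i)
        + csA φ γ p (-e i) t := by
      unfold csA
      rw [inner_neg_right]
      module
    have hc : c t = w t + p - (t ^ 2 / 2) • gradient φ p := by
      simp only [hwdef]; module
    have hsubeq : γ p (e i) t - γ p (-e i) t =
        (2 * t) • e i + (csA φ γ p (e i) t - csA φ γ p (-e i) t) := by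
      rw [hP, hQ]; module
    have hZ : γ p (e i) t + γ p (-e i) t - (2:ℝ) • c t =
        (t ^ 2) • (gradient φ p - (2 * ⟪gradient φ p, e i⟫) • e i)
        + (t ^ 2) • gradient φ p
        + (csA φ γ p (e i) t + csA φ γ p (-e i) t) - (2:ℝ) • w t := by
      rw [hP, hQ, hc]; module
    have huu : ⟪e i, e i⟫ = (1:ℝ) := by
      rw [real_inner_self_eq_norm_sq, hu1]; norm_num
    have hva : ⟪e i, gradient φ p - (2 * ⟪gradient φ p, e i⟫) • e i⟫
        = -⟪e i, gradient φ p⟫ := by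
      rw [inner_sub_right, real_inner_smul_right, huu,
        real_inner_comm (e i) (gradient φ p)]
      ring
    have hEq : 4 * t * ⟪e i, w t⟫ =
        2 * t * ⟪e i, csA φ γ p (e i) t + csA φ γ p (-e i) t⟫
        + ⟪csA φ γ p (e i) t - csA φ γ p (-e i) t,
            γ p (e i) t + γ p (-e i) t - (2:ℝ) • c t⟫ := by
      have h0' := hkey
      rw [hsubeq, inner_add_left, real_inner_smul_left] at h0'
      have hvZ : ⟪e i, γ p (e i) t + γ p (-e i) t - (2:ℝ) • c t⟫ =
          ⟪e i, csA φ γ p (e i) t + csA φ γ p (-e i) t⟫ - 2 * ⟪e i, w t⟫ := by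
        rw [hZ, inner_sub_right, inner_add_right, inner_add_right, inner_add_right,
          real_inner_smul_right, real_inner_smul_right, real_inner_smul_right, hva]
        ring
      rw [hvZ] at h0'
      linarith
    -- norm bound on Z
    have haineq : ‖gradient φ p - (2 * ⟪gradient φ p, e i⟫) • e i‖ ≤ 3 * G' := by
      have hinner : |⟪gradient φ p, e i⟫| ≤ G' := by
        calc |⟪gradient φ p, e i⟫| ≤ ‖gradient φ p‖ * ‖e i‖ := abs_real_inner_le_norm _ _
          _ = G' := by rw [hu1, hG'def]; ring
      calc ‖gradient φ p - (2 * ⟪gradient φ p, e i⟫) • e i‖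
          ≤ ‖gradient φ p‖ + ‖(2 * ⟪gradient φ p, e i⟫) • e i‖ := norm_sub_le _ _
        _ = G' + |2 * ⟪gradient φ p, e i⟫| := by
            rw [norm_smul, hu1, Real.norm_eq_abs, hG'def]; ring
        _ ≤ G' + 2 * G' := by
            have : |2 * ⟪gradient φ p, e i⟫| = 2 * |⟪gradient φ p, e i⟫| := by
              rw [abs_mul]; norm_num
            rw [this]; linarith
        _ = 3 * G' := by ring
    have hZn : ‖γ p (e i) t + γ p (-e i) t - (2:ℝ) • c t‖
        ≤ 4 * t ^ 2 * G' + α t + 2 * ‖w t‖ := by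
      rw [hZ]
      have hAB : ‖csA φ γ p (e i) t + csA φ γ p (-e i) t‖ ≤ α t :=
        le_trans (norm_add_le _ _) (hαi i t)
      calc ‖(t ^ 2) • (gradient φ p - (2 * ⟪gradient φ p, e i⟫) • e i)
            + (t ^ 2) • gradient φ p
            + (csA φ γ p (e i) t + csA φ γ p (-e i) t) - (2:ℝ) • w t‖
          ≤ ‖(t ^ 2) • (gradient φ p - (2 * ⟪gradient φ p, e i⟫) • e i)
            + (t ^ 2) • gradient φ p
            + (csA φ γ p (e i) t + csA φ γ p (-e i) t)‖ + ‖(2:ℝ) • w t‖ := norm_sub_le _ _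
        _ ≤ ‖(t ^ 2) • (gradient φ p - (2 * ⟪gradient φ p, e i⟫) • e i)
            + (t ^ 2) • gradient φ p‖
            + ‖csA φ γ p (e i) t + csA φ γ p (-e i) t‖ + ‖(2:ℝ) • w t‖ := by
              have := norm_add_le ((t ^ 2) • (gradient φ p - (2 * ⟪gradient φ p, e i⟫) • e i)
                + (t ^ 2) • gradient φ p) (csA φ γ p (e i) t + csA φ γ p (-e i) t)
              linarith
        _ ≤ (‖(t ^ 2) • (gradient φ p - (2 * ⟪gradient φ p, e i⟫) • e i)‖
            + ‖(t ^ 2) • gradient φ p‖) + α t + 2 * ‖w t‖ := by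
              have h4 := norm_add_le ((t ^ 2) • (gradient φ p - (2 * ⟪gradient φ p, e i⟫) • e i))
                ((t ^ 2) • gradient φ p)
              have h5 : ‖(2:ℝ) • w t‖ = 2 * ‖w t‖ := by
                rw [norm_smul, Real.norm_eq_abs]; norm_num
              linarith [hAB]
        _ ≤ 4 * t ^ 2 * G' + α t + 2 * ‖w t‖ := by
              have h6 : ‖(t ^ 2) • (gradient φ p - (2 * ⟪gradient φ p, e i⟫) • e i)‖
                  ≤ t ^ 2 * (3 * G') := by
                rw [norm_smul, Real.norm_eq_abs, abs_of_nonneg (sq_nonneg t)]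
                exact mul_le_mul_of_nonneg_left haineq (sq_nonneg t)
              have h7 : ‖(t ^ 2) • gradient φ p‖ = t ^ 2 * G' := by
                rw [norm_smul, Real.norm_eq_abs, abs_of_nonneg (sq_nonneg t), hG'def]
              nlinarith [sq_nonneg t]
    -- combine
    have hwi : w t i = ⟪e i, w t⟫ := by
      simp [hedef, EuclideanSpace.inner_single_left]
    have hABn : ‖csA φ γ p (e i) t + csA φ γ p (-e i) t‖ ≤ α t :=
      le_trans (norm_add_le _ _) (hαi i t)
    have hABn' : ‖csA φ γ p (e i) t - csA φ γ p (-e i) t‖ ≤ α t :=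
      le_trans (norm_sub_le _ _) (hαi i t)
    have hi1 : |⟪e i, csA φ γ p (e i) t + csA φ γ p (-e i) t⟫| ≤ α t := by
      calc |⟪e i, csA φ γ p (e i) t + csA φ γ p (-e i) t⟫|
          ≤ ‖e i‖ * ‖csA φ γ p (e i) t + csA φ γ p (-e i) t‖ := abs_real_inner_le_norm _ _
        _ ≤ α t := by rw [hu1, one_mul]; exact hABn
    have hi2 : |⟪csA φ γ p (e i) t - csA φ γ p (-e i) t,
        γ p (e i) t + γ p (-e i) t - (2:ℝ) • c t⟫|
        ≤ α t * (4 * t ^ 2 * G' + α t + 2 * ‖w t‖) := by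
      calc |⟪csA φ γ p (e i) t - csA φ γ p (-e i) t,
            γ p (e i) t + γ p (-e i) t - (2:ℝ) • c t⟫|
          ≤ ‖csA φ γ p (e i) t - csA φ γ p (-e i) t‖
            * ‖γ p (e i) t + γ p (-e i) t - (2:ℝ) • c t‖ := abs_real_inner_le_norm _ _
        _ ≤ α t * (4 * t ^ 2 * G' + α t + 2 * ‖w t‖) := by
            apply mul_le_mul hABn' hZn (norm_nonneg _) (hα0 t)
    calc |w t i| * (4 * t) = |4 * t * ⟪e i, w t⟫| := by
          rw [hwi, abs_mul, abs_of_nonneg (by linarith : (0:ℝ) ≤ 4 * t)]; ring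
      _ ≤ |2 * t * ⟪e i, csA φ γ p (e i) t + csA φ γ p (-e i) t⟫|
          + |⟪csA φ γ p (e i) t - csA φ γ p (-e i) t,
              γ p (e i) t + γ p (-e i) t - (2:ℝ) • c t⟫| := by
            rw [hEq]; exact abs_add_le _ _
      _ ≤ 2 * t * α t + α t * (4 * t ^ 2 * G' + α t + 2 * ‖w t‖) := by
            have h8 : |2 * t * ⟪e i, csA φ γ p (e i) t + csA φ γ p (-e i) t⟫|
                ≤ 2 * t * α t := by
              rw [abs_mul, abs_of_nonneg (by linarith : (0:ℝ) ≤ 2 * t)]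
              exact mul_le_mul_of_nonneg_left hi1 (by linarith)
            linarith [hi2]
  -- assemble the norm bound
  have hm0 : 0 ≤ 2 * t * α t + α t * (4 * t ^ 2 * G' + α t + 2 * ‖w t‖) := by
    have hW0 : 0 ≤ ‖w t‖ := norm_nonneg _
    have a1 : (0:ℝ) ≤ 2 * t * α t := mul_nonneg (by linarith) (hα0 t)
    have a2 : (0:ℝ) ≤ 4 * t ^ 2 * G' + α t + 2 * ‖w t‖ := by
      have := mul_nonneg (mul_nonneg (by norm_num : (0:ℝ) ≤ 4) (sq_nonneg t)) hG'0
      linarith [hα0 t]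
    have := mul_nonneg (hα0 t) a2
    linarith
  have hwcomp : ∀ i : Fin n, |w t i| ≤
      (2 * t * α t + α t * (4 * t ^ 2 * G' + α t + 2 * ‖w t‖)) / (4 * t) := by
    intro i
    rw [le_div_iff₀ (by linarith : (0:ℝ) < 4 * t)]
    exact hcomp i
  have hWn : ‖w t‖ ≤ (n:ℝ) *
      ((2 * t * α t + α t * (4 * t ^ 2 * G' + α t + 2 * ‖w t‖)) / (4 * t)) :=
    euclidean_norm_le_of_forall hNn (w t) _ hwcomp
  have key : 4 * t * ‖w t‖ ≤
      (n:ℝ) * (2 * t * α t + α t * (4 * t ^ 2 * G' + α t + 2 * ‖w t‖)) := by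
    have h4t : (0:ℝ) < 4 * t := by linarith
    calc 4 * t * ‖w t‖ ≤ 4 * t * ((n:ℝ) *
        ((2 * t * α t + α t * (4 * t ^ 2 * G' + α t + 2 * ‖w t‖)) / (4 * t))) :=
          mul_le_mul_of_nonneg_left hWn h4t.le
      _ = (n:ℝ) * (2 * t * α t + α t * (4 * t ^ 2 * G' + α t + 2 * ‖w t‖)) := by
          field_simp
  -- final arithmetic
  have hW0 : 0 ≤ ‖w t‖ := norm_nonneg _
  have expand : (n:ℝ) * (2 * t * α t + α t * (4 * t ^ 2 * G' + α t + 2 * ‖w t‖))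
      = 2 * (n:ℝ) * (t * α t) + 4 * (n:ℝ) * G' * (t ^ 2 * α t)
        + (n:ℝ) * (α t * α t) + 2 * (n:ℝ) * (α t * ‖w t‖) := by ring
  have h2'' : α t * (2 * (n:ℝ)) ≤ t := (le_div_iff₀ (by positivity)).mp h2
  have F1 : α t * (2 * (n:ℝ)) * ‖w t‖ ≤ t * ‖w t‖ := mul_le_mul_of_nonneg_right h2'' hW0
  have s3 : t * α t ≤ t * (η₁ * t ^ 2) := mul_le_mul_of_nonneg_left h1 ht0.le
  have F2 : 2 * (n:ℝ) * (t * α t) ≤ 2 * (n:ℝ) * (t * (η₁ * t ^ 2)) :=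
    mul_le_mul_of_nonneg_left s3 (by positivity)
  have s5 : t ^ 2 * α t ≤ t ^ 2 * (η₁ * t ^ 2) := mul_le_mul_of_nonneg_left h1 (sq_nonneg t)
  have F3 : 4 * (n:ℝ) * G' * (t ^ 2 * α t) ≤ 4 * (n:ℝ) * G' * (t ^ 2 * (η₁ * t ^ 2)) :=
    mul_le_mul_of_nonneg_left s5 (by positivity)
  have F4 : α t * (2 * (n:ℝ)) * α t ≤ t * α t := mul_le_mul_of_nonneg_right h2'' (hα0 t)
  have t4le : t ^ 4 ≤ t ^ 3 := pow_le_pow_of_le_one ht0.le ht1 (by norm_num)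
  have F5 : 4 * (n:ℝ) * G' * η₁ * t ^ 4 ≤ 4 * (n:ℝ) * G' * η₁ * t ^ 3 :=
    mul_le_mul_of_nonneg_left t4le (by positivity)
  have hNG : 0 ≤ (n:ℝ) * G' := mul_nonneg hN0.le hG'0
  have F6 : 0 ≤ η₁ * t ^ 3 * (4 * (n:ℝ) + 2 * (n:ℝ) * G' - 1/2) := by
    apply mul_nonneg (by positivity)
    linarith [hN2, hNG]
  have hfin2 : (3 * t) * ‖w t‖ ≤ (3 * t) * (η * t ^ 2) := by
    rw [hηeq]
    linarith [key, expand, F1, F2, F3, F4, F5, F6, s3]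
  have final : ‖w t‖ ≤ η * t ^ 2 := le_of_mul_le_mul_left hfin2 (by linarith)
  calc ‖w t‖ ≤ η * t ^ 2 := final
    _ = η * ‖t ^ 2‖ := by rw [Real.norm_of_nonneg (sq_nonneg t)]
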